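/- arXiv:1802.08756 — 7 statements merged into one kernel-verified Lean document; each statement's English description precedes it below -/
import Mathlib

section
/- In any guarded category, weakening is derivable: if f ∈ Hom•((A⊗A')⊗B, C⊗(D'⊗D)), then the conjugate of f by the associativity isomorphisms lies in Hom•(A⊗(A'⊗B), (C⊗D')⊗D), i.e. any guarded input may be re-marked as unguarded and any guarded output may be re-marked as unguarded. -/
/-! Statement 2: weakening is derivable in any guarded category. -/

open CategoryTheory MonoidalCategory

universe v u

/-- An (abstractly) guarded category structure on a symmetric monoidal category `C`:
distinguished subsets `Hom•(A⊗B, C⊗D) ⊆ Hom(A⊗B, C⊗D)` of partially guarded morphisms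
(`A`: unguarded inputs, `B`: guarded inputs, `C`: unguarded outputs, `D`: guarded outputs),
closed under the rules (uni), (vac), (cmp), (par). -/
structure GuardedStructure (C : Type u) [Category.{v} C] [MonoidalCategory C]
    [SymmetricCategory C] where
  /-- the family of sets of partially guarded morphisms -/
  P : ∀ A B X D : C, Set ((A ⊗ B) ⟶ X ⊗ D)
  /-- rule (uni⊗) -/
  uni : ∀ A : C, (β_ (𝟙_ C) A).hom ∈ P (𝟙_ C) A A (𝟙_ C)
  /-- rule (vac⊗) -/
  vac : ∀ {A B X D : C} (f : A ⟶ X) (g : B ⟶ D), (f ⊗ₘ g) ∈ P A B X D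
  /-- rule (cmp⊗) -/
  cmp : ∀ {A B E F X D : C} {g : (A ⊗ B) ⟶ E ⊗ F} {f : (E ⊗ F) ⟶ X ⊗ D},
    g ∈ P A B E F → f ∈ P E F X D → g ≫ f ∈ P A B X D
  /-- rule (par⊗): the evident transpose of `f ⊗ g` (conjugation by the middle-four
  interchange coherence isomorphism) is partially guarded. -/
  par : ∀ {A B X D A' B' X' D' : C}
    {f : (A ⊗ B) ⟶ X ⊗ D} {g : (A' ⊗ B') ⟶ X' ⊗ D'},
    f ∈ P A B X D → g ∈ P A' B' X' D' →
      tensorμ A A' B B' ≫ (f ⊗ₘ g) ≫ tensorμ X D X' D' ∈ P (A ⊗ A') (B ⊗ B') (X ⊗ X') (D ⊗ D')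

variable {C : Type u} [Category.{v} C] [MonoidalCategory C] [SymmetricCategory C]

set_option maxRecDepth 8000 in
set_option maxHeartbeats 1000000 in
/-- The associator inverse `α⁻¹ : U ⊗ (V ⊗ W) → (U ⊗ V) ⊗ W` is partially guarded,
re-marking the guarded input `V` as unguarded output-side. -/
theorem assoc_inv_mem (G : GuardedStructure C) (U V W : C) :
    (α_ U V W).inv ∈ G.P U (V ⊗ W) (U ⊗ V) W := by
  have h1 := G.par (G.vac (𝟙 U) (𝟙 (𝟙_ C))) (G.uni V)
  have h2 := G.cmp (G.cmp (G.vac (ρ_ U).inv (λ_ V).inv) h1)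
    (G.vac (𝟙 (U ⊗ V)) (λ_ (𝟙_ C)).hom)
  have h3 := G.par h2 (G.vac (𝟙 (𝟙_ C)) (𝟙 W))
  have h4 := G.cmp (G.cmp (G.vac (ρ_ U).inv (𝟙 (V ⊗ W))) h3)
    (G.vac (ρ_ (U ⊗ V)).hom (λ_ W).hom)
  convert h4 using 2
  simp only [tensorμ, braiding_tensorUnit_left, braiding_tensorUnit_right]
  monoidal

/-- **Weakening.** In any guarded category, if
`f ∈ Hom•((A⊗A')⊗B, C⊗(D'⊗D))` then the transpose of `f` along the associativity
isomorphisms lies in `Hom•(A⊗(A'⊗B), (C⊗D')⊗D)`: a guarded input (`A'`) may be re-marked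
as unguarded, and a guarded output (`D'`) may be re-marked as unguarded. -/
theorem guarded_weakening (G : GuardedStructure C) {A A' B X D' D : C}
    (f : ((A ⊗ A') ⊗ B) ⟶ X ⊗ (D' ⊗ D))
    (hf : f ∈ G.P (A ⊗ A') B X (D' ⊗ D)) :
    (α_ A A' B).inv ≫ f ≫ (α_ X D' D).inv ∈ G.P A (A' ⊗ B) (X ⊗ D') D := by
  simpa using G.cmp (G.cmp (assoc_inv_mem G A A' B) hf) (assoc_inv_mem G X D' D)
end

section
/- For any co-Cartesian category (C,+,0) there is a bijective correspondence between guarded structures on C and co-Cartesian guardedness families on C, determined by: f ∈ Hom•(X₁+X₂, Y₁+Y₂) if and only if f∘in₁ ∈ Hom_{in₂}(X₁, Y₁+Y₂). That is, every guarded structure induces a co-Cartesian guardedness family by this formula, every co-Cartesian guardedness family arises from a unique guarded structure, and the two transformations are mutually inverse. -/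
/-! Statement 3: guarded structures on a co-Cartesian category correspond to co-Cartesian guardedness families. -/

open CategoryTheory MonoidalCategory

universe v u

open CategoryTheory.Limits

variable (C : Type u) [Category.{v} C] [HasBinaryCoproducts C] [HasInitial C]

attribute [local instance] CategoryTheory.monoidalOfHasFiniteCoproducts
  CategoryTheory.symmetricOfHasFiniteCoproducts

/-- A *co-Cartesian guardedness family* on a co-Cartesian category `(C, +, 0)`: subsets
`Hom_σ(X, Y₁+Y₂) ⊆ Hom(X, Y₁+Y₂)` (with `σ` the coproduct injection `in₂ : Y₂ → Y₁+Y₂`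
marking the guarded output component `Y₂`), written here `H X Y₁ Y₂`, satisfying
(vac₊), (cmp₊) and (par₊). -/
structure CoCartesianGuardedness where
  /-- `H X Y₁ Y₂` represents `Hom_{in₂}(X, Y₁+Y₂)`. -/
  H : ∀ X Y₁ Y₂ : C, Set (X ⟶ Y₁ ⨿ Y₂)
  /-- rule (vac₊): `f : X → Z` implies `in₁ ∘ f : X →_{in₂} Z+Y`. -/
  vac : ∀ {X Z : C} (Y : C) (f : X ⟶ Z), f ≫ coprod.inl ∈ H X Z Y
  /-- rule (cmp₊): `f : X →_{in₂} Y+Z`, `g : Y →_σ V` and `h : Z → V` imply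
  `[g,h] ∘ f : X →_σ V`. -/
  cmp : ∀ {X Y Z V₁ V₂ : C} (f : X ⟶ Y ⨿ Z) (g : Y ⟶ V₁ ⨿ V₂) (h : Z ⟶ V₁ ⨿ V₂),
    f ∈ H X Y Z → g ∈ H Y V₁ V₂ → f ≫ coprod.desc g h ∈ H X V₁ V₂
  /-- rule (par₊): `f : X →_σ Z` and `g : Y →_σ Z` imply `[f,g] : X+Y →_σ Z`. -/
  par : ∀ {X Y Z₁ Z₂ : C} (f : X ⟶ Z₁ ⨿ Z₂) (g : Y ⟶ Z₁ ⨿ Z₂),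
    f ∈ H X Z₁ Z₂ → g ∈ H Y Z₁ Z₂ → coprod.desc f g ∈ H (X ⨿ Y) Z₁ Z₂

variable {C}

/-- The relation determining the correspondence between a guarded structure and a
co-Cartesian guardedness family: `f ∈ Hom•(X₁+X₂, Y₁+Y₂)` iff
`f ∘ in₁ ∈ Hom_{in₂}(X₁, Y₁+Y₂)`. -/
def Determines (G : GuardedStructure C) (H : CoCartesianGuardedness C) : Prop :=
  ∀ (X₁ X₂ Y₁ Y₂ : C) (f : (X₁ ⊗ X₂) ⟶ Y₁ ⊗ Y₂),
    f ∈ G.P X₁ X₂ Y₁ Y₂ ↔ (coprod.inl ≫ f : X₁ ⟶ Y₁ ⨿ Y₂) ∈ H.H X₁ Y₁ Y₂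

set_option linter.unusedSectionVars false

namespace GuardAux

open CategoryTheory.Limits

set_option maxHeartbeats 1000000

variable {C : Type u} [Category.{v} C] [HasBinaryCoproducts C] [HasInitial C]
attribute [local instance] CategoryTheory.monoidalOfHasFiniteCoproducts
  CategoryTheory.symmetricOfHasFiniteCoproducts

lemma tμ (X₁ X₂ Y₁ Y₂ : C) : tensorμ X₁ X₂ Y₁ Y₂ =
    coprod.desc (coprod.map coprod.inl coprod.inl) (coprod.map coprod.inr coprod.inr) := by
  apply coprod.hom_ext <;> apply coprod.hom_ext <;>
  simp [tensorμ, CategoryTheory.monoidalOfHasFiniteCoproducts.associator_hom,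
    CategoryTheory.monoidalOfHasFiniteCoproducts.associator_inv] <;>
  repeat (first | rw [coprod.inl_desc_assoc] | rw [coprod.inr_desc_assoc] | rw [coprod.inl_desc] | rw [coprod.inr_desc])
  all_goals simp

lemma braid (X Y : C) : (β_ X Y).hom = coprod.desc coprod.inr coprod.inl := by
  simp

lemma unitEq : (𝟙_ C : C) = ⊥_ C := rfl

lemma thom {W X Y Z : C} (f : W ⟶ X) (g : Y ⟶ Z) : (f ⊗ₘ g) = coprod.map f g := rfl

variable (G : GuardedStructure C)

/-- transport membership along an equality of morphisms -/
lemma memP {A B X D : C} {f g : A ⨿ B ⟶ X ⨿ D} (h : f ∈ G.P A B X D) (e : f = g) :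
    g ∈ G.P A B X D := e ▸ h

/-- Any morphism whose unguarded-input component is initial is partially guarded. -/
lemma L1 {B V₁ V₂ : C} (u : (𝟙_ C) ⨿ B ⟶ V₁ ⨿ V₂) : u ∈ G.P (𝟙_ C) B V₁ V₂ := by
  have w₁ := G.par (G.uni V₁) (G.vac (𝟙 (𝟙_ C)) (𝟙 V₂))
  have pre := G.vac (initial.to ((𝟙_ C) ⨿ (𝟙_ C))) (𝟙 (V₁ ⨿ V₂))
  have post := G.vac (coprod.desc (𝟙 V₁) (initial.to V₁)) (coprod.desc (initial.to V₂) (𝟙 V₂))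
  have m0 := G.vac (𝟙 (𝟙_ C)) (coprod.inr ≫ u)
  have total := G.cmp m0 (G.cmp pre (G.cmp w₁ post))
  refine memP G total ?_
  simp only [tμ, thom, braid, unitEq]
  apply coprod.hom_ext
  · apply initial.hom_ext
  · (repeat (first | simp | rw [coprod.inl_desc_assoc] | rw [coprod.inr_desc_assoc] | rw [coprod.inl_desc] | rw [coprod.inr_desc] | rw [coprod.inl_map_assoc] | rw [coprod.inr_map_assoc] | rw [coprod.inl_map] | rw [coprod.inr_map]))

lemma shift_fwd {X₁ X₂ Y₁ Y₂ : C} {f : X₁ ⨿ X₂ ⟶ Y₁ ⨿ Y₂}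
    (hf : f ∈ G.P X₁ X₂ Y₁ Y₂) :
    coprod.desc (coprod.inl ≫ f) coprod.inr ∈ G.P X₁ Y₂ Y₁ Y₂ := by
  have w := G.par hf (G.vac (𝟙 (𝟙_ C)) (𝟙 Y₂))
  have pre := G.vac (coprod.inl : X₁ ⟶ X₁ ⨿ (𝟙_ C)) (coprod.inr : Y₂ ⟶ X₂ ⨿ Y₂)
  have post := G.vac (coprod.desc (𝟙 Y₁) (initial.to Y₁)) (coprod.desc (𝟙 Y₂) (𝟙 Y₂))
  have total := G.cmp pre (G.cmp w post)
  refine memP G total ?_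
  simp only [tμ, thom, braid, unitEq]
  apply coprod.hom_ext <;> (repeat (first | simp | rw [coprod.inl_desc_assoc] | rw [coprod.inr_desc_assoc] | rw [coprod.inl_desc] | rw [coprod.inr_desc] | rw [coprod.inl_map_assoc] | rw [coprod.inr_map_assoc] | rw [coprod.inl_map] | rw [coprod.inr_map]))

lemma shift_bwd {X₁ X₂ Y₁ Y₂ : C} {f : X₁ ⨿ X₂ ⟶ Y₁ ⨿ Y₂}
    (hd : coprod.desc (coprod.inl ≫ f) coprod.inr ∈ G.P X₁ Y₂ Y₁ Y₂) :
    f ∈ G.P X₁ X₂ Y₁ Y₂ := by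
  have w := G.par hd (G.uni Y₁)
  have pre := G.vac (coprod.inl : X₁ ⟶ X₁ ⨿ (𝟙_ C))
    (coprod.desc coprod.inr coprod.inl : Y₁ ⨿ Y₂ ⟶ Y₂ ⨿ Y₁)
  have post := G.vac (coprod.desc (𝟙 Y₁) (𝟙 Y₁)) (coprod.desc (𝟙 Y₂) (initial.to Y₂))
  have m := G.vac (𝟙 X₁) (coprod.inr ≫ f : X₂ ⟶ Y₁ ⨿ Y₂)
  have total := G.cmp m (G.cmp pre (G.cmp w post))
  refine memP G total ?_
  simp only [tμ, thom, braid, unitEq]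
  apply coprod.hom_ext <;> (repeat (first | simp | rw [coprod.inl_desc_assoc] | rw [coprod.inr_desc_assoc] | rw [coprod.inl_desc] | rw [coprod.inr_desc] | rw [coprod.inl_map_assoc] | rw [coprod.inr_map_assoc] | rw [coprod.inl_map] | rw [coprod.inr_map]))

/-- The co-Cartesian guardedness family induced by a guarded structure. -/
def GtoH : CoCartesianGuardedness C where
  H X Y₁ Y₂ := {g | coprod.desc g coprod.inr ∈ G.P X Y₂ Y₁ Y₂}
  vac {X Z} Y f := by
    show coprod.desc (f ≫ coprod.inl) coprod.inr ∈ G.P X Y Z Y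
    refine memP G (G.vac f (𝟙 Y)) ?_
    simp only [thom]
    apply coprod.hom_ext <;> (repeat (first | simp | rw [coprod.inl_desc_assoc] | rw [coprod.inr_desc_assoc] | rw [coprod.inl_desc] | rw [coprod.inr_desc] | rw [coprod.inl_map_assoc] | rw [coprod.inr_map_assoc] | rw [coprod.inl_map] | rw [coprod.inr_map]))
  cmp {X Y Z V₁ V₂} f g h hf hg := by
    show coprod.desc (f ≫ coprod.desc g h) coprod.inr ∈ G.P X V₂ V₁ V₂
    have hf' : coprod.desc f coprod.inr ∈ G.P X Z Y Z := hf
    have hg' : coprod.desc g coprod.inr ∈ G.P Y V₂ V₁ V₂ := hg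
    have pre0 := G.vac (𝟙 X) (coprod.inr : V₂ ⟶ Z ⨿ V₂)
    have w1 := G.par hf' (G.vac (𝟙 (𝟙_ C)) (𝟙 V₂))
    have preA := G.vac (coprod.inl : X ⟶ X ⨿ (𝟙_ C)) (𝟙 (Z ⨿ V₂))
    have postA := G.vac (coprod.desc (𝟙 Y) (initial.to Y)) (𝟙 (Z ⨿ V₂))
    have M1 := G.cmp preA (G.cmp w1 postA)
    have hL := L1 G (coprod.desc (initial.to (V₁ ⨿ V₂)) h : (𝟙_ C) ⨿ Z ⟶ V₁ ⨿ V₂)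
    have w2 := G.par hg' hL
    have preB := G.vac (coprod.inl : Y ⟶ Y ⨿ (𝟙_ C))
      (coprod.desc coprod.inr coprod.inl : Z ⨿ V₂ ⟶ V₂ ⨿ Z)
    have postB := G.vac (coprod.desc (𝟙 V₁) (𝟙 V₁)) (coprod.desc (𝟙 V₂) (𝟙 V₂))
    have M2 := G.cmp preB (G.cmp w2 postB)
    have total := G.cmp pre0 (G.cmp M1 M2)
    refine memP G total ?_
    simp only [tμ, thom, braid, unitEq]
    apply coprod.hom_ext <;> (repeat (first | simp | rw [coprod.inl_desc_assoc] | rw [coprod.inr_desc_assoc] | rw [coprod.inl_desc] | rw [coprod.inr_desc] | rw [coprod.inl_map_assoc] | rw [coprod.inr_map_assoc] | rw [coprod.inl_map] | rw [coprod.inr_map]))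
  par {X Y Z₁ Z₂} f g hf hg := by
    show coprod.desc (coprod.desc f g) coprod.inr ∈ G.P (X ⨿ Y) Z₂ Z₁ Z₂
    have hf' : coprod.desc f coprod.inr ∈ G.P X Z₂ Z₁ Z₂ := hf
    have hg' : coprod.desc g coprod.inr ∈ G.P Y Z₂ Z₁ Z₂ := hg
    have w := G.par hf' hg'
    have pre := G.vac (𝟙 (X ⨿ Y)) (coprod.inl : Z₂ ⟶ Z₂ ⨿ Z₂)
    have post := G.vac (coprod.desc (𝟙 Z₁) (𝟙 Z₁)) (coprod.desc (𝟙 Z₂) (𝟙 Z₂))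
    have total := G.cmp pre (G.cmp w post)
    refine memP G total ?_
    simp only [tμ, thom, braid, unitEq]
    apply coprod.hom_ext
    · apply coprod.hom_ext <;> (repeat (first | simp | rw [coprod.inl_desc_assoc] | rw [coprod.inr_desc_assoc] | rw [coprod.inl_desc] | rw [coprod.inr_desc] | rw [coprod.inl_map_assoc] | rw [coprod.inr_map_assoc] | rw [coprod.inl_map] | rw [coprod.inr_map]))
    · (repeat (first | simp | rw [coprod.inl_desc_assoc] | rw [coprod.inr_desc_assoc] | rw [coprod.inl_desc] | rw [coprod.inr_desc] | rw [coprod.inl_map_assoc] | rw [coprod.inr_map_assoc] | rw [coprod.inl_map] | rw [coprod.inr_map]))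

lemma det_GtoH : Determines G (GtoH G) :=
  fun _ _ _ _ _ => ⟨fun hf => shift_fwd G hf, fun hf => shift_bwd G hf⟩

variable {G}

/-- The guarded structure induced by a co-Cartesian guardedness family. -/
def HtoG (H : CoCartesianGuardedness C) : GuardedStructure C where
  P A B X D := {f | (coprod.inl ≫ f : A ⟶ X ⨿ D) ∈ H.H A X D}
  uni A := by
    show (coprod.inl ≫ (β_ (𝟙_ C) A).hom : (𝟙_ C) ⟶ A ⨿ (𝟙_ C)) ∈ H.H (𝟙_ C) A (𝟙_ C)
    have h := H.vac (𝟙_ C) (initial.to A)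
    have e : (initial.to A ≫ coprod.inl : (𝟙_ C) ⟶ A ⨿ (𝟙_ C)) =
        (coprod.inl ≫ (β_ (𝟙_ C) A).hom : (𝟙_ C) ⟶ A ⨿ (𝟙_ C)) := initial.hom_ext _ _
    exact e ▸ h
  vac {A B X D} f g := by
    show (coprod.inl ≫ coprod.map f g : A ⟶ X ⨿ D) ∈ H.H A X D
    have h := H.vac D f
    have e : (f ≫ coprod.inl : A ⟶ X ⨿ D) = coprod.inl ≫ coprod.map f g := by simp
    exact e ▸ h
  cmp {A B E F X D} g f hg hf := by
    show (coprod.inl ≫ (g ≫ f) : A ⟶ X ⨿ D) ∈ H.H A X D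
    have hg' : (coprod.inl ≫ g : A ⟶ E ⨿ F) ∈ H.H A E F := hg
    have hf' : (coprod.inl ≫ f : E ⟶ X ⨿ D) ∈ H.H E X D := hf
    have h := H.cmp (coprod.inl ≫ g) (coprod.inl ≫ f) (coprod.inr ≫ f) hg' hf'
    have e : (coprod.inl ≫ g) ≫ coprod.desc (coprod.inl ≫ f) (coprod.inr ≫ f) =
        (coprod.inl ≫ (g ≫ f) : A ⟶ X ⨿ D) := by
      have : coprod.desc (coprod.inl ≫ f) (coprod.inr ≫ f) = f := by
        apply coprod.hom_ext <;> (repeat (first | simp | rw [coprod.inl_desc_assoc] | rw [coprod.inr_desc_assoc] | rw [coprod.inl_desc] | rw [coprod.inr_desc] | rw [coprod.inl_map_assoc] | rw [coprod.inr_map_assoc] | rw [coprod.inl_map] | rw [coprod.inr_map]))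
      rw [this, Category.assoc]
    exact e ▸ h
  par {A B X D A' B' X' D'} f g hf hg := by
    show (coprod.inl ≫ (tensorμ A A' B B' ≫ (f ⊗ₘ g) ≫ tensorμ X D X' D') :
      A ⨿ A' ⟶ (X ⨿ X') ⨿ (D ⨿ D')) ∈ H.H (A ⨿ A') (X ⨿ X') (D ⨿ D')
    have hf' : (coprod.inl ≫ f : A ⟶ X ⨿ D) ∈ H.H A X D := hf
    have hg' : (coprod.inl ≫ g : A' ⟶ X' ⨿ D') ∈ H.H A' X' D' := hg
    have ha := H.cmp (coprod.inl ≫ f)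
      ((coprod.inl : X ⟶ X ⨿ X') ≫ coprod.inl) ((coprod.inl : D ⟶ D ⨿ D') ≫ coprod.inr)
      hf' (H.vac (D ⨿ D') (coprod.inl : X ⟶ X ⨿ X'))
    have hb := H.cmp (coprod.inl ≫ g)
      ((coprod.inr : X' ⟶ X ⨿ X') ≫ coprod.inl) ((coprod.inr : D' ⟶ D ⨿ D') ≫ coprod.inr)
      hg' (H.vac (D ⨿ D') (coprod.inr : X' ⟶ X ⨿ X'))
    have h := H.par _ _ ha hb
    have e : coprod.desc
        ((coprod.inl ≫ f) ≫ coprod.desc ((coprod.inl : X ⟶ X ⨿ X') ≫ coprod.inl)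
          ((coprod.inl : D ⟶ D ⨿ D') ≫ coprod.inr))
        ((coprod.inl ≫ g) ≫ coprod.desc ((coprod.inr : X' ⟶ X ⨿ X') ≫ coprod.inl)
          ((coprod.inr : D' ⟶ D ⨿ D') ≫ coprod.inr)) =
        (coprod.inl ≫ (tensorμ A A' B B' ≫ (f ⊗ₘ g) ≫ tensorμ X D X' D') :
          A ⨿ A' ⟶ (X ⨿ X') ⨿ (D ⨿ D')) := by
      simp only [tμ, thom, braid, unitEq]
      apply coprod.hom_ext <;> (repeat (first | simp | rw [coprod.inl_desc_assoc] | rw [coprod.inr_desc_assoc] | rw [coprod.inl_desc] | rw [coprod.inr_desc] | rw [coprod.inl_map_assoc] | rw [coprod.inr_map_assoc] | rw [coprod.inl_map] | rw [coprod.inr_map]))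
    exact e ▸ h

lemma det_HtoG (H : CoCartesianGuardedness C) : Determines (HtoG H) H :=
  fun _ _ _ _ _ => Iff.rfl

lemma CCG_ext {H₁ H₂ : CoCartesianGuardedness C} (h : H₁.H = H₂.H) : H₁ = H₂ := by
  cases H₁; cases H₂; cases h; rfl

lemma GS_ext {G₁ G₂ : GuardedStructure C} (h : G₁.P = G₂.P) : G₁ = G₂ := by
  cases G₁; cases G₂; cases h; rfl

end GuardAux


/-- For a co-Cartesian category `(C,+,0)` there is a bijective
correspondence between guarded structures and co-Cartesian guardedness families,
determined by `f ∈ Hom•(X₁+X₂, Y₁+Y₂) ↔ f ∘ in₁ ∈ Hom_{in₂}(X₁, Y₁+Y₂)`: every guarded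
structure determines a unique such family, every family arises from a unique guarded
structure, and the two transformations are mutually inverse. -/
theorem coCartesian_guardedness_correspondence :
    (∀ G : GuardedStructure C, ∃! H : CoCartesianGuardedness C, Determines G H) ∧
    (∀ H : CoCartesianGuardedness C, ∃! G : GuardedStructure C, Determines G H) := by
  constructor
  · intro G
    refine ⟨GuardAux.GtoH G, GuardAux.det_GtoH G, ?_⟩
    intro H hH
    apply GuardAux.CCG_ext
    funext X Y₁ Y₂
    ext g
    have h1 := hH X Y₂ Y₁ Y₂ (coprod.desc g coprod.inr)
    have h2 := GuardAux.det_GtoH G X Y₂ Y₁ Y₂ (coprod.desc g coprod.inr)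
    rw [coprod.inl_desc] at h1 h2
    show g ∈ H.H X Y₁ Y₂ ↔ g ∈ (GuardAux.GtoH G).H X Y₁ Y₂
    rw [← h1, ← h2]
  · intro H
    refine ⟨GuardAux.HtoG H, GuardAux.det_HtoG H, ?_⟩
    intro G hG
    apply GuardAux.GS_ext
    funext X₁ X₂ Y₁ Y₂
    ext f
    exact hG X₁ X₂ Y₁ Y₂ f
end

section
/- In any guarded category, the family Hom^gd of guarded morphisms is a guarded ideal: Hom^gd(I,I) = Hom(I,I), Hom^gd is closed under ⊗, and Hom^gd is closed under composition with arbitrary morphisms on both sides. -/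
/-! Statement 5: the guarded morphisms of a guarded category form a guarded ideal. -/

open CategoryTheory MonoidalCategory

universe v u

variable {C : Type u} [Category.{v} C] [MonoidalCategory C] [SymmetricCategory C]

/-- A morphism `f : X ⟶ Y` of a guarded category is *guarded* if
`υ_Y⁻¹ ∘ f ∘ υ̂_X ∈ Hom•(X ⊗ I, I ⊗ Y)` (all inputs unguarded, all outputs guarded). -/
def GuardedMor (G : GuardedStructure C) (X Y : C) : Set (X ⟶ Y) :=
  {f | (ρ_ X).hom ≫ f ≫ (λ_ Y).inv ∈ G.P X (𝟙_ C) (𝟙_ C) Y}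

/-- A *guarded ideal* in a symmetric monoidal category: a family of subsets
`G(X,Y) ⊆ Hom(X,Y)` closed under `⊗` and under composition with arbitrary morphisms on both
sides, with `G(I,I) = Hom(I,I)`. -/
def IsGuardedIdeal (Gd : ∀ X Y : C, Set (X ⟶ Y)) : Prop :=
  (∀ f : 𝟙_ C ⟶ 𝟙_ C, f ∈ Gd (𝟙_ C) (𝟙_ C)) ∧
  (∀ {X Y X' Y' : C} (f : X ⟶ Y) (g : X' ⟶ Y'),
     f ∈ Gd X Y → g ∈ Gd X' Y' → (f ⊗ₘ g) ∈ Gd (X ⊗ X') (Y ⊗ Y')) ∧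
  (∀ {W X Y Z : C} (u : W ⟶ X) (f : X ⟶ Y) (v : Y ⟶ Z),
     f ∈ Gd X Y → u ≫ f ≫ v ∈ Gd W Z)

set_option maxHeartbeats 2000000 in
/-- In any guarded category, the family `Hom^gd` of guarded morphisms is a
guarded ideal: `Hom^gd(I,I) = Hom(I,I)`, it is closed under `⊗`, and it is closed under
composition with arbitrary morphisms on both sides. -/
theorem guardedMor_isGuardedIdeal (G : GuardedStructure C) :
    IsGuardedIdeal (GuardedMor G) := by
  refine ⟨?_, ?_, ?_⟩
  · intro f
    have h : (ρ_ (𝟙_ C)).hom ≫ f ≫ (λ_ (𝟙_ C)).inv = f ⊗ₘ 𝟙 (𝟙_ C) := by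
      rw [← Category.assoc, ← rightUnitor_naturality, Category.assoc, unitors_inv_equal]
      simp
    simp only [GuardedMor, Set.mem_setOf_eq]
    rw [h]
    exact G.vac f (𝟙 (𝟙_ C))
  · intro X Y X' Y' f g hf hg
    have h := G.par hf hg
    have h1 : (𝟙 (X ⊗ X') ⊗ₘ (λ_ (𝟙_ C)).inv) ∈ G.P (X ⊗ X') (𝟙_ C) (X ⊗ X') (𝟙_ C ⊗ 𝟙_ C) :=
      G.vac _ _
    have h2 : ((λ_ (𝟙_ C)).hom ⊗ₘ 𝟙 (Y ⊗ Y')) ∈ G.P (𝟙_ C ⊗ 𝟙_ C) (Y ⊗ Y') (𝟙_ C) (Y ⊗ Y') :=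
      G.vac _ _
    have hmem := G.cmp (G.cmp h1 h) h2
    have heq : (𝟙 (X ⊗ X') ⊗ₘ (λ_ (𝟙_ C)).inv) ≫
        (tensorμ X X' (𝟙_ C) (𝟙_ C) ≫
          (((ρ_ X).hom ≫ f ≫ (λ_ Y).inv) ⊗ₘ ((ρ_ X').hom ≫ g ≫ (λ_ Y').inv)) ≫
          tensorμ (𝟙_ C) Y (𝟙_ C) Y') ≫ ((λ_ (𝟙_ C)).hom ⊗ₘ 𝟙 (Y ⊗ Y')) =
        (ρ_ (X ⊗ X')).hom ≫ (f ⊗ₘ g) ≫ (λ_ (Y ⊗ Y')).inv := by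
      simp [tensorμ, MonoidalCategory.tensorHom_def]
      coherence
    simp only [Category.assoc] at hmem heq
    simp only [GuardedMor, Set.mem_setOf_eq]
    rw [← heq]
    exact hmem
  · intro W X Y Z u f v hf
    have h1 : (u ⊗ₘ 𝟙 (𝟙_ C)) ∈ G.P W (𝟙_ C) X (𝟙_ C) := G.vac _ _
    have h2 : (𝟙 (𝟙_ C) ⊗ₘ v) ∈ G.P (𝟙_ C) Y (𝟙_ C) Z := G.vac _ _
    have hf' : (ρ_ X).hom ≫ f ≫ (λ_ Y).inv ∈ G.P X (𝟙_ C) (𝟙_ C) Y := hf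
    have hmem := G.cmp (G.cmp h1 hf') h2
    have heq : (u ⊗ₘ 𝟙 (𝟙_ C)) ≫ ((ρ_ X).hom ≫ f ≫ (λ_ Y).inv) ≫ (𝟙 (𝟙_ C) ⊗ₘ v) =
        (ρ_ W).hom ≫ (u ≫ f ≫ v) ≫ (λ_ Z).inv := by
      simp
    simp only [GuardedMor, Set.mem_setOf_eq]
    rw [← heq]
    simpa using hmem
end

section
/- On every symmetric monoidal category, the vacuous (least) guarded structure is ideal: it coincides with the guarded structure generated by the guarded ideal that it induces, i.e. it is generated by its own family of guarded morphisms Hom^gd. -/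
/-! Statement 6: the vacuous (least) guarded structure is ideal. -/

open CategoryTheory MonoidalCategory

universe v u

variable {C : Type u} [Category.{v} C] [MonoidalCategory C] [SymmetricCategory C]

/-- `G` is the guarded structure *generated* by the family `Gd`: it is the least guarded
structure in which every member of every `Gd X Y` is a guarded morphism.  A guarded category
is *ideally guarded over `Gd`* if its guarded structure is generated by `Gd`. -/
def Generates (Gd : ∀ X Y : C, Set (X ⟶ Y)) (G : GuardedStructure C) : Prop :=
  (∀ (X Y : C) (f : X ⟶ Y), f ∈ Gd X Y → f ∈ GuardedMor G X Y) ∧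
  (∀ G' : GuardedStructure C,
    (∀ (X Y : C) (f : X ⟶ Y), f ∈ Gd X Y → f ∈ GuardedMor G' X Y) →
    ∀ (A B X D : C) (f : (A ⊗ B) ⟶ X ⊗ D), f ∈ G.P A B X D → f ∈ G'.P A B X D)

/-- Membership in the vacuous guarded structure: `f` factors, up to the associator,
as `(h ⊗ 𝟙 D) ∘ (𝟙 A ⊗ g)` with `g : B ⟶ E ⊗ D`, `h : A ⊗ E ⟶ C`. -/
def VacuouslyGuarded (A B X D : C) (f : (A ⊗ B) ⟶ X ⊗ D) : Prop :=
  ∃ (E : C) (g : B ⟶ E ⊗ D) (h : (A ⊗ E) ⟶ X),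
    f = (𝟙 A ⊗ₘ g) ≫ (α_ A E D).inv ≫ (h ⊗ₘ 𝟙 D)

/-- In any guarded structure, the inverse associator, regarded as a morphism
`A ⊗ (E ⊗ D) ⟶ (A ⊗ E) ⊗ D` with `A` an unguarded input, `E ⊗ D` a guarded input,
`A ⊗ E` an unguarded output and `D` a guarded output, is partially guarded. -/
lemma assoc_inv_mem_s6 (G' : GuardedStructure C) (A E D : C) :
    (α_ A E D).inv ∈ G'.P A (E ⊗ D) (A ⊗ E) D := by
  -- a structural morphism `I ⊗ (E ⊗ D) ⟶ E ⊗ D` in `P I (E⊗D) E D`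
  have h2 := G'.cmp (G'.cmp (G'.vac (λ_ (𝟙_ C)).inv (𝟙 (E ⊗ D)))
    (G'.par (G'.uni E) (G'.vac (𝟙 (𝟙_ C)) (𝟙 D)))) (G'.vac (ρ_ E).hom (λ_ D).hom)
  have h3 := G'.cmp (G'.cmp (G'.vac (ρ_ A).inv (λ_ (E ⊗ D)).inv)
      (G'.par (G'.vac (𝟙 A) (𝟙 (𝟙_ C))) h2)) (G'.vac (𝟙 (A ⊗ E)) (λ_ D).hom)
  convert h3 using 2
  simp only [tensorμ, braiding_tensorUnit_left, braiding_tensorUnit_right]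
  coherence

/-- On every symmetric monoidal category, the vacuous (least) guarded
structure is ideal: it is generated by the guarded ideal it induces, i.e. by its own family
of guarded morphisms `Hom^gd`. -/
theorem vacuous_guarded_structure_is_ideal (G : GuardedStructure C)
    (hvac : ∀ (A B X D : C) (f : (A ⊗ B) ⟶ X ⊗ D),
      f ∈ G.P A B X D ↔ VacuouslyGuarded A B X D f) :
    Generates (GuardedMor G) G := by
  constructor
  · exact fun X Y f hf => hf
  · intro G' _ A B X D f hf
    obtain ⟨E, g, h, rfl⟩ := (hvac A B X D f).mp hf
    -- `𝟙 A ⊗ g ∈ P A B A (E ⊗ D)` by (vac)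
    have s1 : (𝟙 A ⊗ₘ g) ∈ G'.P A B A (E ⊗ D) := G'.vac (𝟙 A) g
    -- `h ⊗ 𝟙 D ∈ P (A ⊗ E) D X D` by (vac)
    have s3 : (h ⊗ₘ 𝟙 D) ∈ G'.P (A ⊗ E) D X D := G'.vac h (𝟙 D)
    -- the associator `(α_ A E D).inv ∈ P A (E ⊗ D) (A ⊗ E) D`
    have s2 : (α_ A E D).inv ∈ G'.P A (E ⊗ D) (A ⊗ E) D := assoc_inv_mem_s6 G' A E D
    have := G'.cmp s1 (G'.cmp s2 s3)
    simpa using this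
end

section
/- Let G be a guarded ideal on a co-Cartesian category (C,+,0). The guarded structure generated by G is equivalently described, in terms of its associated co-Cartesian guardedness family, by Hom_{in₂}(X, Y+Z) = { [in₁, g]∘h | W an object, g ∈ G(W, Y+Z), h : X → Y+W }; consequently this guarded structure induces G, i.e. its guarded morphisms are exactly the members of G. -/
/-! Statement 8: description of the guarded structure generated by a guarded ideal on a co-Cartesian category. -/

open CategoryTheory MonoidalCategory

universe v u

variable {C : Type u} [Category.{v} C] [MonoidalCategory C] [SymmetricCategory C]

open CategoryTheory.Limits

section CoCartesian

variable {D : Type u} [Category.{v} D] [HasBinaryCoproducts D] [HasInitial D]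

attribute [local instance] CategoryTheory.monoidalOfHasFiniteCoproducts
  CategoryTheory.symmetricOfHasFiniteCoproducts


namespace Statement8Aux

variable {Gd : ∀ X Y : D, Set (X ⟶ Y)}

theorem tensorμ_eq (A B X Y : D) : tensorμ A B X Y =
    coprod.desc (coprod.map coprod.inl coprod.inl) (coprod.map coprod.inr coprod.inr) := by
  apply coprod.hom_ext <;> apply coprod.hom_ext <;>
    simp [tensorμ, monoidalOfHasFiniteCoproducts.associator_hom,
      monoidalOfHasFiniteCoproducts.associator_inv, coprod.inl_desc, coprod.inr_desc,
      coprod.inl_desc_assoc, coprod.inr_desc_assoc]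

theorem unit_eq : (𝟙_ D) = ⊥_ D := rfl

theorem initial_mem (hGd : IsGuardedIdeal Gd) {T : D} (f : ⊥_ D ⟶ T) :
    f ∈ Gd (⊥_ D) T := by
  have h := hGd.2.2 (𝟙 (⊥_ D)) (𝟙 (𝟙_ D)) (initial.to T) (hGd.1 (𝟙 _))
  have : (𝟙 (⊥_ D) ≫ 𝟙 (𝟙_ D) ≫ initial.to T) = f := initial.hom_ext _ _
  rwa [this] at h

theorem desc_mem (hGd : IsGuardedIdeal Gd) {W W' T : D} {f : W ⟶ T} {f' : W' ⟶ T}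
    (hf : f ∈ Gd W T) (hf' : f' ∈ Gd W' T) : coprod.desc f f' ∈ Gd (W ⨿ W') T := by
  have h1 : (f ⊗ₘ f') ∈ Gd (W ⊗ W') (T ⊗ T) := hGd.2.1 f f' hf hf'
  have h2 := hGd.2.2 (𝟙 (W ⨿ W')) _ (coprod.desc (𝟙 T) (𝟙 T)) h1
  simpa using h2

theorem comp_mem (hGd : IsGuardedIdeal Gd) {X Y Z : D} {f : X ⟶ Y} (v : Y ⟶ Z)
    (hf : f ∈ Gd X Y) : f ≫ v ∈ Gd X Z := by
  have := hGd.2.2 (𝟙 X) f v hf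
  simpa using this

/-- The candidate guarded structure generated by a guarded ideal. -/
def genGS (Gd : ∀ X Y : D, Set (X ⟶ Y)) (hGd : IsGuardedIdeal Gd) : GuardedStructure D where
  P A B X Dd :=
    {f | ∃ (W : D) (g : W ⟶ X ⨿ Dd) (_ : g ∈ Gd W (X ⨿ Dd)) (h : A ⟶ X ⨿ W),
        (coprod.inl ≫ f : A ⟶ X ⨿ Dd) = h ≫ coprod.desc coprod.inl g}
  uni A := ⟨⊥_ D, initial.to _, initial_mem hGd _, initial.to _, initial.hom_ext _ _⟩
  vac {A B X Dd} f g :=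
    ⟨⊥_ D, initial.to _, initial_mem hGd _, f ≫ coprod.inl, by simp [coprod.inl_desc, coprod.inr_desc, coprod.inl_desc_assoc, coprod.inr_desc_assoc]⟩
  cmp {A B E F X Dd} {g f} hg hf := by
    obtain ⟨W, k, hk, h, he⟩ := hg
    obtain ⟨W', k', hk', h', he'⟩ := hf
    refine ⟨W' ⨿ W, coprod.desc k' (k ≫ f), desc_mem hGd hk' (comp_mem hGd f hk),
      h ≫ coprod.desc (h' ≫ coprod.map (𝟙 X) coprod.inl) (coprod.inr ≫ coprod.inr), ?_⟩
    rw [← Category.assoc, he]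
    simp only [Category.assoc, coprod.desc_comp, coprod.inl_desc, coprod.inr_desc]
    rw [he']
    simp [coprod.inl_desc, coprod.inr_desc, coprod.inl_desc_assoc, coprod.inr_desc_assoc]
  par {A B X Dd A' B' X' Dd'} {f g} hf hg := by
    obtain ⟨W, k, hk, h, he⟩ := hf
    obtain ⟨W', k', hk', h', he'⟩ := hg
    refine ⟨W ⨿ W', coprod.desc (k ≫ coprod.map coprod.inl coprod.inl)
        (k' ≫ coprod.map coprod.inr coprod.inr),
      desc_mem hGd (comp_mem hGd _ hk) (comp_mem hGd _ hk'),
      coprod.desc (h ≫ coprod.map coprod.inl coprod.inl)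
        (h' ≫ coprod.map coprod.inr coprod.inr), ?_⟩
    apply coprod.hom_ext
    · simp only [tensorμ_eq, monoidalOfHasFiniteCoproducts.tensorHom, coprod.inl_desc,
        ← Category.assoc, coprod.inl_map]
      simp only [Category.assoc, coprod.inl_map, coprod.inl_desc]
      rw [reassoc_of% he]
      simp [coprod.inl_desc, coprod.inr_desc, coprod.inl_desc_assoc, coprod.inr_desc_assoc]
    · simp only [tensorμ_eq, monoidalOfHasFiniteCoproducts.tensorHom]
      simp only [coprod.inr_desc, coprod.inr_desc_assoc, coprod.inr_map, coprod.inr_map_assoc,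
        coprod.inl_map, coprod.inl_map_assoc, coprod.inl_desc, coprod.inl_desc_assoc,
        Category.assoc]
      rw [reassoc_of% he']
      simp [coprod.inl_desc, coprod.inr_desc, coprod.inl_desc_assoc, coprod.inr_desc_assoc]

theorem genGS_guards (hGd : IsGuardedIdeal Gd) (X Y : D) (f : X ⟶ Y) (hf : f ∈ Gd X Y) :
    f ∈ GuardedMor (genGS Gd hGd) X Y := by
  refine ⟨X, (f ≫ coprod.inr : X ⟶ 𝟙_ D ⨿ Y), ?_, (coprod.inr : X ⟶ 𝟙_ D ⨿ X), ?_⟩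
  · have := hGd.2.2 (𝟙 X) f (coprod.inr : Y ⟶ 𝟙_ D ⨿ Y) hf
    simpa using this
  · simp only [monoidalOfHasFiniteCoproducts.rightUnitor_hom,
      monoidalOfHasFiniteCoproducts.leftUnitor_inv, coprod.inl_desc_assoc, coprod.inl_desc,
      coprod.inr_desc, Category.id_comp]

theorem key (hGd : IsGuardedIdeal Gd) (G : GuardedStructure D)
    (hG : ∀ (X Y : D) (f : X ⟶ Y), f ∈ Gd X Y → f ∈ GuardedMor G X Y)
    {X Y Z W : D} (g : W ⟶ Y ⨿ Z) (hg : g ∈ Gd W (Y ⨿ Z)) (h : X ⟶ Y ⨿ W) :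
    coprod.desc (h ≫ coprod.desc coprod.inl g) (initial.to (Y ⨿ Z)) ∈ G.P X (⊥_ D) Y Z := by
  have hgG := hG W (Y ⨿ Z) g hg
  have s := G.cmp (G.cmp (G.vac (initial.to ((𝟙_ D) ⊗ (𝟙_ D))) (𝟙 (Y ⊗ Z)))
      (G.par (G.uni Y) (G.vac (𝟙 (𝟙_ D)) (𝟙 Z))))
    (G.vac (coprod.desc (𝟙 Y) (initial.to Y) : Y ⊗ 𝟙_ D ⟶ Y)
      (coprod.desc (initial.to Z) (𝟙 Z) : 𝟙_ D ⊗ Z ⟶ Z))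
  have t2 := G.cmp hgG s
  have t4 := G.par (G.vac (𝟙 Y) (𝟙 (𝟙_ D))) t2
  have t := G.cmp (G.cmp (G.vac (h : X ⟶ Y ⊗ W) (initial.to ((𝟙_ D) ⊗ (𝟙_ D)))) t4)
    (G.vac (coprod.desc (𝟙 Y) (𝟙 Y) : Y ⊗ Y ⟶ Y)
      (coprod.desc (initial.to Z) (𝟙 Z) : 𝟙_ D ⊗ Z ⟶ Z))
  show coprod.desc (h ≫ coprod.desc coprod.inl g) (initial.to (Y ⨿ Z)) ∈ G.P X (𝟙_ D) Y Z
  refine (congrArg (fun x : (X ⊗ 𝟙_ D ⟶ Y ⊗ Z) => x ∈ G.P X (𝟙_ D) Y Z) ?_).mpr t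
  apply coprod.hom_ext
  · simp [tensorμ_eq, unit_eq, coprod.inl_desc, coprod.inr_desc, coprod.inl_desc_assoc, coprod.inr_desc_assoc]
  · exact initial.hom_ext _ _

end Statement8Aux

/-- Let `Gd` be a guarded ideal on a co-Cartesian category `(C,+,0)` and
let `G` be the guarded structure generated by `Gd`.  Then, in terms of the associated
co-Cartesian guardedness family (where `u ∈ Hom_{in₂}(X, Y+Z)` is rendered as
`[u, ¡] ∈ Hom•(X+0, Y+Z)`),

`Hom_{in₂}(X, Y+Z) = { [in₁, g] ∘ h ∣ W an object, g ∈ Gd W (Y+Z), h : X ⟶ Y+W }`,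

and consequently the generated guarded structure induces `Gd`, i.e. its guarded morphisms
are exactly the members of `Gd`. -/
theorem generated_guarded_structure_coCartesian (Gd : ∀ X Y : D, Set (X ⟶ Y))
    (hGd : IsGuardedIdeal Gd) (G : GuardedStructure D) (hgen : Generates Gd G) :
    (∀ (X Y Z : D) (u : X ⟶ Y ⨿ Z),
      (coprod.desc u (initial.to (Y ⨿ Z)) ∈ G.P X (⊥_ D) Y Z) ↔
        ∃ (W : D) (g : W ⟶ Y ⨿ Z) (_ : g ∈ Gd W (Y ⨿ Z)) (h : X ⟶ Y ⨿ W),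
          u = h ≫ coprod.desc coprod.inl g) ∧
    (∀ X Y : D, GuardedMor G X Y = Gd X Y) := by
  obtain ⟨hmem, hmin⟩ := hgen
  constructor
  · intro X Y Z u
    constructor
    · intro hu
      obtain ⟨W, g, hg, h, he⟩ := hmin (Statement8Aux.genGS Gd hGd)
        (Statement8Aux.genGS_guards hGd) X (⊥_ D) Y Z _ hu
      refine ⟨W, g, hg, h, ?_⟩
      simpa [coprod.inl_desc, coprod.inr_desc, coprod.inl_desc_assoc, coprod.inr_desc_assoc] using he
    · rintro ⟨W, g, hg, h, rfl⟩
      exact Statement8Aux.key hGd G hmem g hg h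
  · intro X Y
    ext f
    constructor
    · intro hf
      obtain ⟨W, g, hg, h, he⟩ := hmin (Statement8Aux.genGS Gd hGd)
        (Statement8Aux.genGS_guards hGd) X (𝟙_ D) (𝟙_ D) Y _ hf
      have he2 : f ≫ (coprod.inr : Y ⟶ 𝟙_ D ⨿ Y) = h ≫ coprod.desc coprod.inl g := by
        simpa [Statement8Aux.unit_eq, coprod.inl_desc, coprod.inr_desc, coprod.inl_desc_assoc, coprod.inr_desc_assoc] using he
      have hf3 : f = h ≫ coprod.desc (initial.to Y)
          (g ≫ coprod.desc (initial.to Y) (𝟙 Y)) := by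
        have h0 : f = (f ≫ (coprod.inr : Y ⟶ 𝟙_ D ⨿ Y)) ≫
            (coprod.desc (initial.to Y) (𝟙 Y) : 𝟙_ D ⨿ Y ⟶ Y) := by simp [coprod.inl_desc, coprod.inr_desc, coprod.inl_desc_assoc, coprod.inr_desc_assoc]
        rw [h0, he2]
        simp [coprod.inl_desc, coprod.inr_desc, coprod.inl_desc_assoc, coprod.inr_desc_assoc]
      have hmemb : coprod.desc (initial.to Y) (g ≫ coprod.desc (initial.to Y) (𝟙 Y))
          ∈ Gd (𝟙_ D ⨿ W) Y :=
        Statement8Aux.desc_mem hGd (Statement8Aux.initial_mem hGd _)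
          (Statement8Aux.comp_mem hGd _ hg)
      have hres := hGd.2.2 h _ (𝟙 Y) hmemb
      simp only [Category.comp_id] at hres
      rwa [hf3]
    · intro hf
      exact hmem X Y f hf


end CoCartesian
end

section
/- Let G be a guarded ideal on a Cartesian closed category C. Define a candidate Cartesian guardedness family by: f ∈ Hom^{pr₁}(X×Y, Z) iff curry(f) ∈ G(X, Z^Y). This family describes the guarded structure generated by G if and only if G is exponential, i.e. f ∈ G(X,Y) implies f^V ∈ G(X^V, Y^V) for every object V. -/
/-! Statement 10: the curry description of the generated guarded structure on a Cartesian closed category holds iff the ideal is exponential. -/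

open CategoryTheory MonoidalCategory

universe v u

variable {C : Type u} [Category.{v} C] [MonoidalCategory C] [SymmetricCategory C]

open CategoryTheory.CartesianMonoidalCategory CategoryTheory.CartesianClosed CategoryTheory.MonoidalClosed

section CCC

variable {D : Type u} [Category.{v} D] [CartesianMonoidalCategory D] [MonoidalClosed D]

attribute [local instance] BraidedCategory.ofCartesianMonoidalCategory

set_option linter.unusedSectionVars false

lemma lu (X : D) : (λ_ X).hom = snd _ _ := by
  rw [← Category.comp_id ((λ_ X).hom), ← leftUnitor_inv_snd X, Iso.hom_inv_id_assoc]

lemma ru (X : D) : (ρ_ X).hom = fst _ _ := by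
  rw [← Category.comp_id ((ρ_ X).hom), ← rightUnitor_inv_fst X, Iso.hom_inv_id_assoc]

lemma braid (X Y : D) : (β_ X Y).hom = lift (snd X Y) (fst X Y) := by
  ext
  · have h : (fst Y X : Y ⊗ X ⟶ Y) = (Y ◁ toUnit X) ≫ (ρ_ Y).hom := by rw [ru]; simp
    rw [h, ← Category.assoc, ← BraidedCategory.braiding_naturality_left, Category.assoc,
      braiding_rightUnitor, lu]
    simp [ru]
  · have h : (snd Y X : Y ⊗ X ⟶ X) = (toUnit Y ▷ X) ≫ (λ_ X).hom := by rw [lu]; simp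
    rw [h, ← Category.assoc, ← BraidedCategory.braiding_naturality_right, Category.assoc,
      braiding_leftUnitor, ru]
    simp [lu, ru]

lemma lu_inv (X : D) : (λ_ X).inv = lift (toUnit X) (𝟙 X) := by ext <;> simp
lemma ru_inv (X : D) : (ρ_ X).inv = lift (𝟙 X) (toUnit X) := by ext <;> simp

lemma tensorμ_eq (X₁ X₂ Y₁ Y₂ : D) : tensorμ X₁ X₂ Y₁ Y₂ =
    lift (lift (fst _ _ ≫ fst _ _) (snd _ _ ≫ fst _ _))
      (lift (fst _ _ ≫ snd _ _) (snd _ _ ≫ snd _ _)) := by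
  ext <;> simp [tensorμ, braid]

set_option maxRecDepth 4000 in
lemma memP_fst (G : GuardedStructure D) {A B X : D} (h : (A ⊗ B) ⟶ X) :
    lift h (toUnit _) ∈ G.P A B X (𝟙_ D) := by
  have e1 : (𝟙 (A ⊗ 𝟙_ D)) ∈ G.P A (𝟙_ D) A (𝟙_ D) := by
    simpa using G.vac (𝟙 A) (𝟙 (𝟙_ D))
  have e6 := G.cmp (G.cmp (G.vac ((ρ_ A).inv) ((λ_ B).inv)) (G.par e1 (G.uni B)))
    (G.vac h (toUnit ((𝟙_ D) ⊗ (𝟙_ D))))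
  have hQ : ((ρ_ A).inv ⊗ₘ (λ_ B).inv) ≫
      (tensorμ A (𝟙_ D) (𝟙_ D) B ≫ (𝟙 (A ⊗ 𝟙_ D) ⊗ₘ (β_ (𝟙_ D) B).hom) ≫
        tensorμ A (𝟙_ D) B (𝟙_ D)) =
      lift (𝟙 (A ⊗ B)) (lift (toUnit _) (toUnit _)) := by
    ext <;> first
      | apply toUnit_unique
      | simp [tensorμ_eq, braid, lu, ru, lu_inv, ru_inv, comp_lift_assoc]
  refine Set.mem_of_eq_of_mem ?_ e6
  rw [hQ]
  ext
  · simp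

lemma memP_of_guarded (G : GuardedStructure D) {A B X Y : D} (h : (A ⊗ B) ⟶ X) (f : X ⟶ Y)
    (hf : f ∈ GuardedMor G X Y) :
    lift (toUnit _) (h ≫ f) ∈ G.P A B (𝟙_ D) Y := by
  have e := G.cmp (memP_fst G h) hf
  refine Set.mem_of_eq_of_mem ?_ e
  ext
  · simp [lu, ru]


lemma lift_ev {W B Z : D} (u : W ⟶ B) (q : W ⟶ B ⟹ Z) :
    lift u q ≫ (ihom.ev B).app Z = lift u (𝟙 W) ≫ uncurry q := by
  rw [uncurry_eq, ← Category.assoc]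
  congr 1
  ext <;> simp

lemma memP_eval (G : GuardedStructure D) {X Y Z : D} (cg : X ⟶ Y ⟹ Z)
    (hcg : cg ∈ GuardedMor G X (Y ⟹ Z)) :
    lift (toUnit _) (lift (snd X Y) (fst X Y ≫ cg) ≫ (ihom.ev Y).app Z) ∈ G.P X Y (𝟙_ D) Z := by
  have e1 : (𝟙 ((𝟙_ D) ⊗ Y)) ∈ G.P (𝟙_ D) Y (𝟙_ D) Y := by
    simpa using G.vac (𝟙 (𝟙_ D)) (𝟙 Y)
  have e6 := G.cmp (G.cmp (G.vac ((ρ_ X).inv) ((λ_ Y).inv)) (G.par hcg e1))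
    (G.vac (toUnit ((𝟙_ D) ⊗ (𝟙_ D))) ((β_ (Y ⟹ Z) Y).hom ≫ (ihom.ev Y).app Z))
  have hQ : ((ρ_ X).inv ⊗ₘ (λ_ Y).inv) ≫
      (tensorμ X (𝟙_ D) (𝟙_ D) Y ≫
        (((ρ_ X).hom ≫ cg ≫ (λ_ (Y ⟹ Z)).inv) ⊗ₘ 𝟙 ((𝟙_ D) ⊗ Y)) ≫
        tensorμ (𝟙_ D) (Y ⟹ Z) (𝟙_ D) Y) =
      lift (lift (toUnit _) (toUnit _)) (lift (fst X Y ≫ cg) (snd X Y)) := by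
    ext <;> first
      | apply toUnit_unique
      | simp [tensorμ_eq, braid, lu, ru, lu_inv, ru_inv, comp_lift_assoc]
  refine Set.mem_of_eq_of_mem ?_ e6
  rw [hQ]
  ext
  · simp [braid, comp_lift_assoc]

lemma ev_lift_curry {W B A' Z : D} (u : W ⟶ B) (v : W ⟶ A') (h : (B ⊗ A') ⟶ Z) :
    lift u (v ≫ curry h) ≫ (ihom.ev B).app Z = lift u v ≫ h := by
  have e : lift u (v ≫ curry h) = lift u v ≫ (B ◁ curry h) := by ext <;> simp
  rw [e, Category.assoc, ← uncurry_eq, uncurry_curry]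

section Ideal
variable {Gd : ∀ X Y : D, Set (X ⟶ Y)}
  (hI : ∀ f : 𝟙_ D ⟶ 𝟙_ D, f ∈ Gd (𝟙_ D) (𝟙_ D))
  (hT : ∀ {X Y X' Y' : D} (f : X ⟶ Y) (g : X' ⟶ Y'),
     f ∈ Gd X Y → g ∈ Gd X' Y' → (f ⊗ₘ g) ∈ Gd (X ⊗ X') (Y ⊗ Y'))
  (hC : ∀ {W X Y Z : D} (u : W ⟶ X) (f : X ⟶ Y) (v : Y ⟶ Z),
     f ∈ Gd X Y → u ≫ f ≫ v ∈ Gd W Z)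

include hI hC in
lemma unit_factor {W Z : D} (u : W ⟶ 𝟙_ D) (v : 𝟙_ D ⟶ Z) : u ≫ v ∈ Gd W Z := by
  simpa using hC u (𝟙 _) v (hI (𝟙 _))

include hI hT hC in
lemma curry_cmp
    (hexp : ∀ (V X Y : D) (f : X ⟶ Y), f ∈ Gd X Y → (ihom V).map f ∈ Gd (V ⟹ X) (V ⟹ Y))
    {A B E F X Dd : D} {g : (A ⊗ B) ⟶ E ⊗ F} {f : (E ⊗ F) ⟶ X ⊗ Dd}
    (hg : curry ((β_ B A).hom ≫ g ≫ snd E F) ∈ Gd A (B ⟹ F))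
    (hf : curry ((β_ F E).hom ≫ f ≫ snd X Dd) ∈ Gd E (F ⟹ Dd)) :
    curry ((β_ B A).hom ≫ (g ≫ f) ≫ snd X Dd) ∈ Gd A (B ⟹ Dd) := by
  set cf : E ⟶ F ⟹ Dd := curry ((β_ F E).hom ≫ f ≫ snd X Dd) with hcf
  set cg : A ⟶ B ⟹ F := curry ((β_ B A).hom ≫ g ≫ snd E F) with hcg
  set p : A ⟶ B ⟹ (F ⟹ Dd) := curry (((β_ B A).hom ≫ g ≫ fst E F) ≫ cf) with hp
  set T : (B ⊗ ((B ⟹ (F ⟹ Dd)) ⊗ (B ⟹ F))) ⟶ Dd :=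
    lift (lift (fst _ _) (snd _ _ ≫ snd _ _) ≫ (ihom.ev B).app F)
         (lift (fst _ _) (snd _ _ ≫ fst _ _) ≫ (ihom.ev B).app (F ⟹ Dd)) ≫
      (ihom.ev F).app Dd with hTdef
  have hpG : p ∈ Gd A (B ⟹ (F ⟹ Dd)) := by
    rw [hp, curry_natural_right]
    simpa using hC (curry ((β_ B A).hom ≫ g ≫ fst E F)) ((ihom B).map cf) (𝟙 _)
      (hexp B _ _ cf hf)
  have c1 : (B ◁ lift p cg) ≫ lift (fst _ _) (snd _ _ ≫ snd _ _) ≫ (ihom.ev B).app F =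
      (β_ B A).hom ≫ g ≫ snd E F := by
    rw [← Category.assoc,
      show (B ◁ lift p cg) ≫ lift (fst _ _) (snd _ _ ≫ snd _ _) =
        lift (fst B A) (snd B A ≫ cg) from by ext <;> simp,
      hcg, ev_lift_curry]
    simp
  have c2 : (B ◁ lift p cg) ≫ lift (fst _ _) (snd _ _ ≫ fst _ _) ≫
        (ihom.ev B).app (F ⟹ Dd) =
      ((β_ B A).hom ≫ g ≫ fst E F) ≫ cf := by
    rw [← Category.assoc,
      show (B ◁ lift p cg) ≫ lift (fst _ _) (snd _ _ ≫ fst _ _) =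
        lift (fst B A) (snd B A ≫ p) from by ext <;> simp,
      hp, ev_lift_curry]
    simp
  have collapse : lift ((β_ B A).hom ≫ g ≫ snd E F) ((β_ B A).hom ≫ g ≫ fst E F) ≫
      (β_ F E).hom = (β_ B A).hom ≫ g := by
    ext <;> simp [braid]
  have key : (B ◁ lift p cg) ≫ T = (β_ B A).hom ≫ (g ≫ f) ≫ snd X Dd := by
    rw [hTdef, comp_lift_assoc, c1, c2, hcf,
      ev_lift_curry ((β_ B A).hom ≫ g ≫ snd E F) ((β_ B A).hom ≫ g ≫ fst E F)
        ((β_ F E).hom ≫ f ≫ snd X Dd),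
      show lift ((β_ B A).hom ≫ g ≫ snd E F) ((β_ B A).hom ≫ g ≫ fst E F) ≫
          ((β_ F E).hom ≫ f ≫ snd X Dd) = ((β_ B A).hom ≫ g) ≫ (f ≫ snd X Dd) from by
        rw [← Category.assoc, collapse]]
    simp
  have main : curry ((β_ B A).hom ≫ (g ≫ f) ≫ snd X Dd) = lift p cg ≫ curry T := by
    rw [← key, curry_natural_left]
  rw [main, show (lift p cg : A ⟶ _) = lift (𝟙 A) (𝟙 A) ≫ (p ⊗ₘ cg) from by simp,
    Category.assoc]
  exact hC _ _ _ (hT _ _ hpG hg)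
end Ideal

section Ideal2
variable {Gd : ∀ X Y : D, Set (X ⟶ Y)}
  (hI : ∀ f : 𝟙_ D ⟶ 𝟙_ D, f ∈ Gd (𝟙_ D) (𝟙_ D))
  (hT : ∀ {X Y X' Y' : D} (f : X ⟶ Y) (g : X' ⟶ Y'),
     f ∈ Gd X Y → g ∈ Gd X' Y' → (f ⊗ₘ g) ∈ Gd (X ⊗ X') (Y ⊗ Y'))
  (hC : ∀ {W X Y Z : D} (u : W ⟶ X) (f : X ⟶ Y) (v : Y ⟶ Z),
     f ∈ Gd X Y → u ≫ f ≫ v ∈ Gd W Z)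

include hI hC in
lemma curry_uni (A : D) :
    curry ((β_ A (𝟙_ D)).hom ≫ (β_ (𝟙_ D) A).hom ≫ snd A (𝟙_ D)) ∈ Gd (𝟙_ D) (A ⟹ 𝟙_ D) := by
  simpa using hC (𝟙 (𝟙_ D)) (𝟙 (𝟙_ D))
    (curry ((β_ A (𝟙_ D)).hom ≫ (β_ (𝟙_ D) A).hom ≫ snd A (𝟙_ D))) (hI (𝟙 _))

include hI hC in
lemma curry_vac {A B X Dd : D} (f : A ⟶ X) (g : B ⟶ Dd) :
    curry ((β_ B A).hom ≫ (f ⊗ₘ g) ≫ snd X Dd) ∈ Gd A (B ⟹ Dd) := by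
  have heq : (β_ B A).hom ≫ (f ⊗ₘ g) ≫ snd X Dd = (B ◁ toUnit A) ≫ ((ρ_ B).hom ≫ g) := by
    simp [braid, ru]
  rw [heq, curry_natural_left]
  exact unit_factor hI hC (toUnit A) (curry _)

set_option maxRecDepth 4000 in
include hT hC in
lemma curry_par {A B X Dd A' B' X' Dd' : D}
    {f : (A ⊗ B) ⟶ X ⊗ Dd} {g : (A' ⊗ B') ⟶ X' ⊗ Dd'}
    (hf : curry ((β_ B A).hom ≫ f ≫ snd X Dd) ∈ Gd A (B ⟹ Dd))
    (hg : curry ((β_ B' A').hom ≫ g ≫ snd X' Dd') ∈ Gd A' (B' ⟹ Dd')) :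
    curry ((β_ (B ⊗ B') (A ⊗ A')).hom ≫
        (tensorμ A A' B B' ≫ (f ⊗ₘ g) ≫ tensorμ X Dd X' Dd') ≫ snd (X ⊗ X') (Dd ⊗ Dd')) ∈
      Gd (A ⊗ A') ((B ⊗ B') ⟹ (Dd ⊗ Dd')) := by
  set cf : A ⟶ B ⟹ Dd := curry ((β_ B A).hom ≫ f ≫ snd X Dd) with hcf
  set cg : A' ⟶ B' ⟹ Dd' := curry ((β_ B' A').hom ≫ g ≫ snd X' Dd') with hcg
  have key : ((B ⊗ B') ◁ (cf ⊗ₘ cg)) ≫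
      (lift (lift (fst _ _ ≫ fst B B') (snd _ _ ≫ fst (B ⟹ Dd) (B' ⟹ Dd')) ≫ (ihom.ev B).app Dd)
            (lift (fst _ _ ≫ snd B B') (snd _ _ ≫ snd (B ⟹ Dd) (B' ⟹ Dd')) ≫
              (ihom.ev B').app Dd')) =
      (β_ (B ⊗ B') (A ⊗ A')).hom ≫
        (tensorμ A A' B B' ≫ (f ⊗ₘ g) ≫ tensorμ X Dd X' Dd') ≫ snd (X ⊗ X') (Dd ⊗ Dd') := by
    apply hom_ext
    · rw [Category.assoc, lift_fst, ← Category.assoc,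
        show ((B ⊗ B') ◁ (cf ⊗ₘ cg)) ≫
            lift (fst _ _ ≫ fst B B') (snd _ _ ≫ fst (B ⟹ Dd) (B' ⟹ Dd')) =
          lift (fst (B ⊗ B') (A ⊗ A') ≫ fst B B')
            ((snd (B ⊗ B') (A ⊗ A') ≫ fst A A') ≫ cf) from by
            ext <;> simp, hcf,
        ev_lift_curry (fst (B ⊗ B') (A ⊗ A') ≫ fst B B') (snd (B ⊗ B') (A ⊗ A') ≫ fst A A')
          ((β_ B A).hom ≫ f ≫ snd X Dd)]
      simp only [tensorμ_eq, braid]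
      simp [comp_lift_assoc]
    · rw [Category.assoc, lift_snd, ← Category.assoc,
        show ((B ⊗ B') ◁ (cf ⊗ₘ cg)) ≫
            lift (fst _ _ ≫ snd B B') (snd _ _ ≫ snd (B ⟹ Dd) (B' ⟹ Dd')) =
          lift (fst (B ⊗ B') (A ⊗ A') ≫ snd B B')
            ((snd (B ⊗ B') (A ⊗ A') ≫ snd A A') ≫ cg) from by
            ext <;> simp, hcg,
        ev_lift_curry (fst (B ⊗ B') (A ⊗ A') ≫ snd B B') (snd (B ⊗ B') (A ⊗ A') ≫ snd A A')
          ((β_ B' A').hom ≫ g ≫ snd X' Dd')]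
      simp only [tensorμ_eq, braid]
      simp [comp_lift_assoc]
  rw [← key, curry_natural_left]
  simpa using hC (𝟙 _) (cf ⊗ₘ cg) (curry _) (hT cf cg hf hg)
end Ideal2

/-- The candidate guarded structure defined through currying. -/
def curryStructure (Gd : ∀ X Y : D, Set (X ⟶ Y)) (hGd : IsGuardedIdeal Gd)
    (hexp : ∀ (V X Y : D) (f : X ⟶ Y), f ∈ Gd X Y → (ihom V).map f ∈ Gd (V ⟹ X) (V ⟹ Y)) :
    GuardedStructure D where
  P A B X Dd := {f | curry ((β_ B A).hom ≫ f ≫ snd X Dd) ∈ Gd A (B ⟹ Dd)}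
  uni A := curry_uni hGd.1 hGd.2.2 A
  vac f g := curry_vac hGd.1 hGd.2.2 f g
  cmp hg hf := curry_cmp hGd.1 hGd.2.1 hGd.2.2 hexp hg hf
  par hf hg := curry_par hGd.2.1 hGd.2.2 hf hg


/-- Let `Gd` be a guarded ideal on a Cartesian closed category and let
`G` be the guarded structure generated by `Gd`.  The candidate Cartesian guardedness family
given by `f ∈ Hom^{pr₁}(X×Y, Z) ↔ curry f ∈ Gd X (Z^Y)` describes the generated guarded
structure (where `u ∈ Hom^{pr₁}(X×Y, Z)` is rendered as `⟨!, u⟩ ∈ Hom•(X×Y, 1×Z)`) if and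
only if `Gd` is *exponential*: `f ∈ Gd X Y` implies `f^V ∈ Gd (X^V) (Y^V)` for all `V`. -/
theorem curry_describes_generated_iff_exponential (Gd : ∀ X Y : D, Set (X ⟶ Y))
    (hGd : IsGuardedIdeal Gd) (G : GuardedStructure D) (hgen : Generates Gd G) :
    (∀ (X Y Z : D) (f : (X ⊗ Y) ⟶ Z),
      (lift (toUnit (X ⊗ Y)) f ∈ G.P X Y (𝟙_ D) Z) ↔
        curry ((β_ Y X).hom ≫ f) ∈ Gd X (Y ⟹ Z)) ↔
    (∀ (V X Y : D) (f : X ⟶ Y), f ∈ Gd X Y → (ihom V).map f ∈ Gd (V ⟹ X) (V ⟹ Y)) := by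
  constructor
  · intro hdesc V X Y f hf
    have h1 : lift (toUnit _) (((β_ (V ⟹ X) V).hom ≫ (ihom.ev V).app X) ≫ f) ∈
        G.P (V ⟹ X) V (𝟙_ D) Y :=
      memP_of_guarded G _ f (hgen.1 X Y f hf)
    have h2 := (hdesc (V ⟹ X) V Y _).1 h1
    have heq : (β_ V (V ⟹ X)).hom ≫ (((β_ (V ⟹ X) V).hom ≫ (ihom.ev V).app X) ≫ f) =
        (ihom.ev V).app X ≫ f := by
      simp [braid, comp_lift_assoc]
    have hmap : curry ((ihom.ev V).app X ≫ f) = (ihom V).map f := by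
      calc curry ((ihom.ev V).app X ≫ f) = curry (uncurry (𝟙 (V ⟹ X)) ≫ f) := by
            rw [uncurry_id_eq_ev]
        _ = curry (uncurry ((𝟙 (V ⟹ X)) ≫ (ihom V).map f)) := by rw [uncurry_natural_right]
        _ = (ihom V).map f := by rw [curry_uncurry, Category.id_comp]
    rw [heq, hmap] at h2
    exact h2
  · intro hexp X Y Z f
    constructor
    · intro hmem
      have hmem' := hgen.2 (curryStructure Gd hGd hexp) ?_ X Y (𝟙_ D) Z (lift (toUnit _) f) hmem
      · simpa [curryStructure] using hmem'
      · intro X' Y' f' hf'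
        show curry ((β_ (𝟙_ D) X').hom ≫ ((ρ_ X').hom ≫ f' ≫ (λ_ Y').inv) ≫ snd (𝟙_ D) Y') ∈
          Gd X' ((𝟙_ D) ⟹ Y')
        rw [show (β_ (𝟙_ D) X').hom ≫ ((ρ_ X').hom ≫ f' ≫ (λ_ Y').inv) ≫ snd (𝟙_ D) Y' =
            ((𝟙_ D) ◁ f') ≫ snd (𝟙_ D) Y' from by simp [braid, ru, lu, lu_inv], curry_natural_left]
        simpa using hGd.2.2 (𝟙 X') f' (curry (snd (𝟙_ D) Y')) hf'
    · intro hcurry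
      have hg : curry ((β_ Y X).hom ≫ f) ∈ GuardedMor G X (Y ⟹ Z) := hgen.1 _ _ _ hcurry
      have hm := memP_eval G (curry ((β_ Y X).hom ≫ f)) hg
      refine Set.mem_of_eq_of_mem ?_ hm
      congr 1
      rw [ev_lift_curry (snd X Y) (fst X Y) ((β_ Y X).hom ≫ f)]
      simp [braid, comp_lift_assoc]


end CCC
end

section
/- Let C be a Cartesian category and T a strong monad on C with unit η and strength τ (write τ̂_{V,A} : TV×A → T(V×A) for the transpose of the strength). Let (−)_‡ be a recursion operator on C^T_⋆ satisfying naturality. Then (−)_‡ extends to all morphisms f : V×A → A with V an arbitrary object of C and (A,a) an Eilenberg–Moore T-algebra, by setting f_‡ := (a∘(Tf)∘τ̂_{V,A})_‡∘η_V (the operator on the right is applied to a morphism parameterized by the free algebra (TV, μ_V)); this extension agrees with the original operator whenever V carries a T-algebra structure, and the extended operator satisfies f_‡ = (a∘(Tf)∘τ̂_{V,A})_‡∘η_V for all f : V×A→A. -/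
/-! Statement 17: a natural recursion operator on Eilenberg–Moore algebras extends to arbitrary parameter objects. -/

open CategoryTheory CategoryTheory.Limits CategoryTheory.CartesianMonoidalCategory
open CategoryTheory.MonoidalCategory

universe v u

variable {D : Type u} [Category.{v} D] [CartesianMonoidalCategory D]

/-- A *strength* for a monad `T` on a Cartesian category: a natural transformation
`τ_{X,Y} : X × TY ⟶ T(X × Y)` satisfying the usual coherence conditions of strong
monads. -/
structure Strength (T : Monad D) where
  /-- the strength -/
  τ : ∀ X Y : D, (X ⊗ T.obj Y) ⟶ T.obj (X ⊗ Y)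
  natural : ∀ {X X' Y Y' : D} (f : X ⟶ X') (g : Y ⟶ Y'),
    (f ⊗ₘ T.map g) ≫ τ X' Y' = τ X Y ≫ T.map (f ⊗ₘ g)
  unit_comp : ∀ X Y : D, (𝟙 X ⊗ₘ T.η.app Y) ≫ τ X Y = T.η.app (X ⊗ Y)
  mult_comp : ∀ X Y : D, (𝟙 X ⊗ₘ T.μ.app Y) ≫ τ X Y =
    τ X (T.obj Y) ≫ T.map (τ X Y) ≫ T.μ.app (X ⊗ Y)
  unitor_comp : ∀ Y : D, τ (𝟙_ D) Y ≫ T.map (λ_ Y).hom = (λ_ (T.obj Y)).hom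
  assoc_comp : ∀ X Y Z : D,
    (α_ X Y (T.obj Z)).hom ≫ (𝟙 X ⊗ₘ τ Y Z) ≫ τ X (Y ⊗ Z) =
      τ (X ⊗ Y) Z ≫ T.map (α_ X Y Z).hom

/-- The transpose `τ̂_{X,Y} : TX × Y ⟶ T(X × Y)` of the strength along the symmetry. -/
def Strength.tauHat {T : Monad D} (s : Strength T) (X Y : D) :
    (T.obj X ⊗ Y) ⟶ T.obj (X ⊗ Y) :=
  letI : BraidedCategory D := BraidedCategory.ofCartesianMonoidalCategory
  (β_ (T.obj X) Y).hom ≫ s.τ Y X ≫ T.map (β_ Y X).hom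

/-- A *recursion operator* on the category `C^T_⋆` of Eilenberg–Moore `T`-algebras and
arbitrary morphisms between their carriers: it assigns to `f : B × A ⟶ A` (with `B`, `A`
algebras) a morphism `f‡ : B ⟶ A` satisfying the fixpoint law `f‡ = f ∘ ⟨id, f‡⟩`. -/
structure RecursionOp (T : Monad D) where
  /-- the recursion operator -/
  recur : ∀ (B A : T.Algebra) (f : (B.A ⊗ A.A) ⟶ A.A), B.A ⟶ A.A
  /-- the fixpoint law `f‡ = f ∘ ⟨id, f‡⟩` -/
  fixpoint : ∀ (B A : T.Algebra) (f : (B.A ⊗ A.A) ⟶ A.A),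
    recur B A f = lift (𝟙 B.A) (recur B A f) ≫ f

/-- naturality of a recursion operator: `f‡ ∘ g = (f ∘ (g × id))‡` for morphisms `g`
between algebra carriers. -/
def RecursionOp.Natural {T : Monad D} (R : RecursionOp T) : Prop :=
  ∀ (B' B A : T.Algebra) (f : (B.A ⊗ A.A) ⟶ A.A) (g : B'.A ⟶ B.A),
    g ≫ R.recur B A f = R.recur B' A ((g ⊗ₘ 𝟙 A.A) ≫ f)

private lemma eta_nat {T : Monad D} {X Y : D} (f : X ⟶ Y) :
    f ≫ T.η.app Y = T.η.app X ≫ T.map f := by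
  simpa using T.η.naturality f

/-- Let `T` be a strong monad on a Cartesian category `C` and let
`(−)‡` be a recursion operator on `C^T_⋆` satisfying naturality.  Then `(−)‡` extends to
all morphisms `f : V × A → A` with `V` an arbitrary object, via
`f‡ := (a ∘ Tf ∘ τ̂_{V,A})‡ ∘ η_V` (using the free algebra `(TV, μ_V)`); the extension
agrees with the original operator whenever `V` carries a `T`-algebra structure. -/
theorem recursion_operator_extension {T : Monad D} (s : Strength T)
    (R : RecursionOp T) (hnat : R.Natural) :
    ∃ ext : ∀ (V : D) (A : T.Algebra) (f : (V ⊗ A.A) ⟶ A.A), V ⟶ A.A,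
      (∀ (V : D) (A : T.Algebra) (f : (V ⊗ A.A) ⟶ A.A),
        ext V A f =
          T.η.app V ≫ R.recur ((Monad.free T).obj V) A (s.tauHat V A.A ≫ T.map f ≫ A.a)) ∧
      (∀ (B A : T.Algebra) (f : (B.A ⊗ A.A) ⟶ A.A), ext B.A A f = R.recur B A f) := by
  refine ⟨fun V A f => T.η.app V ≫ R.recur ((Monad.free T).obj V) A
      (s.tauHat V A.A ≫ T.map f ≫ A.a), fun _ _ _ => rfl, ?_⟩
  intro B A f
  dsimp only
  refine (hnat B ((Monad.free T).obj B.A) A _ (T.η.app B.A)).trans ?_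
  congr 1
  have key : (T.η.app B.A ⊗ₘ 𝟙 A.A) ≫ s.tauHat B.A A.A ≫ T.map f ≫ A.a = f := by
    letI : BraidedCategory D := BraidedCategory.ofCartesianMonoidalCategory
    have h1 : (T.η.app B.A ⊗ₘ 𝟙 A.A) ≫ (β_ (T.obj B.A) A.A).hom =
        (β_ B.A A.A).hom ≫ (𝟙 A.A ⊗ₘ T.η.app B.A) := by
      exact (BraidedCategory.braiding_naturality (T.η.app B.A) (𝟙 A.A)).symm ▸ rfl
    simp only [Strength.tauHat, ← Category.assoc]
    rw [h1]
    slice_lhs 2 3 => rw [s.unit_comp]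
    slice_lhs 2 3 => rw [← eta_nat]
    slice_lhs 3 4 => rw [← eta_nat]
    simp [A.unit]
  exact key
end
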